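/- Let k be a positive integer and F ∈ F_q[x] such that c ↦ F(c) is a permutation of F_{q^k}. Then the map f ↦ F ⋄ f (sending a monic irreducible f of degree k with root α to the minimal polynomial of F(α)) is a permutation of the set I_k of monic irreducible polynomials of degree k over F_q. -/

import Mathlib

open Polynomial IntermediateField

/-- if `P ∈ F_q[x]` permutes `F_{q^k}`, then the induced map
`f ↦ P ⋄ f = minpoly (P(α))` (for `α` a root of `f`) is a permutation of the set
of monic irreducible polynomials of degree `k` over `F_q`. -/
theorem stmt_5 (F : Type*) [Field F] [Fintype F]
    (E : Type*) [Field E] [Algebra F E] [Fintype E]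
    (k : ℕ) (hk : 0 < k) (hE : Fintype.card E = Fintype.card F ^ k)
    (P : Polynomial F)
    (hperm : Function.Bijective (fun c : E => Polynomial.aeval c P))
    (D : Polynomial F → Polynomial F)
    (hD : ∀ f : Polynomial F, f.Monic → Irreducible f → f.natDegree = k →
      ∀ α : E, Polynomial.aeval α f = 0 → D f = minpoly F (Polynomial.aeval α P)) :
    Set.BijOn D {f : Polynomial F | f.Monic ∧ Irreducible f ∧ f.natDegree = k}
      {f : Polynomial F | f.Monic ∧ Irreducible f ∧ f.natDegree = k} := by
  classical
  set S : Set (Polynomial F) := {f : Polynomial F | f.Monic ∧ Irreducible f ∧ f.natDegree = k}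
    with hS
  have hq : 1 < Fintype.card F := Fintype.one_lt_card
  haveI : FiniteDimensional F E := Module.Finite.of_basis (Module.finBasis F E)
  have hrank : Module.finrank F E = k := by
    have h := Module.card_eq_pow_finrank (K := F) (V := E)
    rw [hE] at h
    exact (Nat.pow_right_injective hq h.symm)
  have hint : ∀ α : E, IsIntegral F α := fun α => Algebra.IsIntegral.isIntegral α
  have hfr : ∀ α : E, Module.finrank F F⟮α⟯ = (minpoly F α).natDegree := fun α =>
    IntermediateField.adjoin.finrank (hint α)
  have htop : ∀ K : IntermediateField F E, Module.finrank F K = k → K = ⊤ := by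
    intro K hK
    have h1 : Module.finrank F (Subalgebra.toSubmodule K.toSubalgebra) = Module.finrank F E := by
      rw [hrank]; exact hK
    have h2 := Submodule.eq_top_of_finrank_eq h1
    have h3 : K.toSubalgebra = ⊤ := Algebra.toSubmodule_eq_top.mp h2
    apply IntermediateField.toSubalgebra_injective
    rw [h3, IntermediateField.top_toSubalgebra]
  have hdegtop : ∀ α : E, (minpoly F α).natDegree = k ↔ F⟮α⟯ = ⊤ := by
    intro α
    constructor
    · intro h; exact htop _ (by rw [hfr α, h])
    · intro h
      rw [← hfr α, h, IntermediateField.finrank_top', hrank]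
  -- membership of aeval in intermediate fields
  have hmemP : ∀ (K : IntermediateField F E) (x : E), x ∈ K → aeval x P ∈ K := by
    intro K x hx
    have h1 : Algebra.adjoin F {x} ≤ K.toSubalgebra :=
      Algebra.adjoin_le (Set.singleton_subset_iff.mpr hx)
    exact h1 (Polynomial.aeval_mem_adjoin_singleton F x)
  -- key: α lies in the field generated by P(α)
  have key : ∀ α : E, α ∈ F⟮(aeval α P : E)⟯ := by
    intro α
    set K := F⟮(aeval α P : E)⟯ with hK
    let g : K → K := fun y => ⟨aeval (y : E) P, hmemP K _ y.2⟩
    have hginj : Function.Injective g := by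
      intro y z hyz
      have : aeval (y : E) P = aeval (z : E) P := congrArg Subtype.val hyz
      exact Subtype.ext (hperm.injective this)
    have hgsurj : Function.Surjective g := Finite.surjective_of_injective hginj
    obtain ⟨y, hy⟩ := hgsurj ⟨aeval α P, IntermediateField.mem_adjoin_simple_self F _⟩
    have : aeval (y : E) P = aeval α P := congrArg Subtype.val hy
    have hyα : (y : E) = α := hperm.injective this
    rw [← hyα]; exact y.2
  -- root existence in E for monic irreducibles of degree k
  have hroot : ∀ f : Polynomial F, f.Monic → Irreducible f → f.natDegree = k →
      ∃ α : E, aeval α f = 0 := by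
    intro f hm hirr hdeg
    haveI : Fact (Irreducible f) := ⟨hirr⟩
    set A := AdjoinRoot f
    haveI : FiniteDimensional F A := PowerBasis.finite (AdjoinRoot.powerBasis hirr.ne_zero)
    haveI : Finite A := Module.finite_of_finite F
    haveI : Fintype A := Fintype.ofFinite A
    have hcardA : Fintype.card A = Fintype.card F ^ k := by
      have h := Module.card_eq_pow_finrank (K := F) (V := A)
      rw [(AdjoinRoot.powerBasis hirr.ne_zero).finrank,
        AdjoinRoot.powerBasis_dim, hdeg] at h
      exact h
    -- f divides X ^ (q ^ k) - X
    have hdvd : f ∣ (X ^ Fintype.card F ^ k - X : Polynomial F) := by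
      have hr : aeval (AdjoinRoot.root f) (X ^ Fintype.card F ^ k - X : Polynomial F) = 0 := by
        rw [map_sub, map_pow, aeval_X, ← hcardA, FiniteField.pow_card, sub_self]
      have hmin : minpoly F (AdjoinRoot.root f) = f :=
        (minpoly.eq_of_irreducible_of_monic hirr (by
          rw [AdjoinRoot.aeval_eq, AdjoinRoot.mk_self]) hm).symm
      rw [← hmin]
      exact minpoly.dvd F _ hr
    have hsplits : Splits ((X ^ Fintype.card F ^ k - X : Polynomial F).map (algebraMap F E)) := by
      have := (FiniteField.isSplittingField_sub E F).splits
      rwa [hE] at this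
    have hfsplits : Splits (f.map (algebraMap F E)) :=
      hsplits.of_dvd
        (Polynomial.map_ne_zero (FiniteField.X_pow_card_pow_sub_X_ne_zero F hk.ne' hq)) (Polynomial.map_dvd _ hdvd)
    obtain ⟨α, hα⟩ := hfsplits.exists_eval_eq_zero (by
      rw [degree_map, degree_eq_natDegree hirr.ne_zero, hdeg]
      exact_mod_cast hk.ne')
    exact ⟨α, by rwa [eval_map, ← Polynomial.aeval_def] at hα⟩
  -- minpoly of α with f monic irred root α is f
  have hminp : ∀ (f : Polynomial F) (α : E), f.Monic → Irreducible f → aeval α f = 0 →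
      minpoly F α = f := fun f α hm hirr h0 => (minpoly.eq_of_irreducible_of_monic hirr h0 hm).symm
  -- MapsTo
  have hmaps : Set.MapsTo D S S := by
    rintro f ⟨hm, hirr, hdeg⟩
    obtain ⟨α, hα⟩ := hroot f hm hirr hdeg
    have hDf := hD f hm hirr hdeg α hα
    have hmα : minpoly F α = f := hminp f α hm hirr hα
    have hαtop : F⟮α⟯ = ⊤ := (hdegtop α).mp (by rw [hmα]; exact hdeg)
    have hPtop : F⟮(aeval α P : E)⟯ = ⊤ := by
      have hle : F⟮α⟯ ≤ F⟮(aeval α P : E)⟯ :=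
        IntermediateField.adjoin_simple_le_iff.mpr (key α)
      rw [hαtop] at hle
      exact le_antisymm le_top hle
    have hdegP : (minpoly F (aeval α P)).natDegree = k := (hdegtop _).mpr hPtop
    refine ⟨?_, ?_, ?_⟩
    · rw [hDf]; exact minpoly.monic (hint _)
    · rw [hDf]; exact minpoly.irreducible (hint _)
    · rw [hDf]; exact hdegP
  -- SurjOn
  have hsurj : Set.SurjOn D S S := by
    rintro g ⟨hgm, hgirr, hgdeg⟩
    obtain ⟨γ, hγ⟩ := hroot g hgm hgirr hgdeg
    obtain ⟨α, hα⟩ := hperm.surjective γ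
    simp only at hα
    have hγmem : γ ∈ F⟮α⟯ := by
      rw [← hα]; exact hmemP _ α (IntermediateField.mem_adjoin_simple_self F α)
    have hγtop : F⟮γ⟯ = ⊤ := (hdegtop γ).mp (by rw [hminp g γ hgm hgirr hγ]; exact hgdeg)
    have hαtop : F⟮α⟯ = ⊤ := by
      have hle : F⟮γ⟯ ≤ F⟮α⟯ := IntermediateField.adjoin_simple_le_iff.mpr hγmem
      rw [hγtop] at hle
      exact le_antisymm le_top hle
    set f := minpoly F α with hf
    have hfm : f.Monic := minpoly.monic (hint α)
    have hfirr : Irreducible f := minpoly.irreducible (hint α)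
    have hfdeg : f.natDegree = k := (hdegtop α).mpr hαtop
    refine ⟨f, ⟨hfm, hfirr, hfdeg⟩, ?_⟩
    have hDf := hD f hfm hfirr hfdeg α (by rw [hf]; exact minpoly.aeval F α)
    rw [hDf, hα]
    exact hminp g γ hgm hgirr hγ
  -- finiteness of S
  have hSfin : S.Finite := by
    haveI : Finite (Polynomial.degreeLT F (k + 1)) :=
      Finite.of_equiv _ (Polynomial.degreeLTEquiv F (k + 1)).symm.toEquiv
    apply Set.Finite.subset (Set.toFinite (Polynomial.degreeLT F (k + 1) : Set (Polynomial F)))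
    rintro f ⟨hm, hirr, hdeg⟩
    rw [SetLike.mem_coe, Polynomial.mem_degreeLT, degree_eq_natDegree hirr.ne_zero, hdeg]
    exact_mod_cast Nat.lt_succ_self k
  exact (hSfin.surjOn_iff_bijOn_of_mapsTo hmaps).mp hsurj
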